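/- For k ≥ 4, if a subdivision F of L(K_k) is a line graph, then F is isomorphic to L(K_k) itself (i.e., no edge of L(K_k) was actually subdivided). -/

import Mathlib

open SimpleGraph

universe u

/-- A bundled graph: a vertex type together with a simple graph on it. -/
abbrev GraphSig := Σ V : Type u, SimpleGraph V

/-- `Y` is obtained from `X` by subdividing one edge `ab`: the edge `ab` is replaced by a
path `a - w - b` through a new vertex `w` (modelled by `Option X.1` with `w := none`). -/
def SubdivStep (X Y : GraphSig.{u}) : Prop :=
  ∃ a b : X.1, X.2.Adj a b ∧
    Nonempty (Y.2 ≃g ((X.2.deleteEdges {s(a, b)}).map Function.Embedding.some ⊔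
      SimpleGraph.fromEdgeSet
        {s(Option.some a, (Option.none : Option X.1)), s(Option.some b, Option.none)}))

/-- `H'` is a subdivision of `H`: it is obtained from `H` by a finite sequence of
edge subdivisions. -/
def IsSubdivisionOf (H' H : GraphSig.{u}) : Prop :=
  Relation.ReflTransGen SubdivStep H H'

/-- `G` is a line graph if it is isomorphic to the line graph of some graph. -/
def IsLineGraph {V : Type u} (G : SimpleGraph V) : Prop :=
  ∃ (W : Type u) (H : SimpleGraph W), Nonempty (G ≃g H.lineGraph)

/-! ### Auxiliary notions -/

/-- `G` contains an induced claw `K_{1,3}`. -/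
def HasClaw {V : Type*} (G : SimpleGraph V) : Prop :=
  ∃ c x y z : V, x ≠ y ∧ x ≠ z ∧ y ≠ z ∧
    G.Adj c x ∧ G.Adj c y ∧ G.Adj c z ∧
    ¬G.Adj x y ∧ ¬G.Adj x z ∧ ¬G.Adj y z

lemma HasClaw.of_iso {V W : Type*} {G : SimpleGraph V} {H : SimpleGraph W}
    (e : G ≃g H) (h : HasClaw G) : HasClaw H := by
  obtain ⟨c, x, y, z, hxy, hxz, hyz, acx, acy, acz, nxy, nxz, nyz⟩ := h
  refine ⟨e c, e x, e y, e z, ?_, ?_, ?_, ?_, ?_, ?_, ?_, ?_, ?_⟩ <;>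
    simp [e.map_adj_iff, e.toEquiv.injective.ne_iff, *]

/-- Line graphs are claw-free. -/
lemma not_hasClaw_lineGraph {W : Type*} (H : SimpleGraph W) : ¬ HasClaw H.lineGraph := by
  rintro ⟨e, x, y, z, hxy, hxz, hyz, aex, aey, aez, nxy, nxz, nyz⟩
  obtain ⟨-, ux, huxe, huxx⟩ := lineGraph_adj_iff_exists.mp aex
  obtain ⟨-, uy, huye, huyy⟩ := lineGraph_adj_iff_exists.mp aey
  obtain ⟨-, uz, huze, huzz⟩ := lineGraph_adj_iff_exists.mp aez
  by_cases h1 : ux = uy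
  · exact nxy (lineGraph_adj_iff_exists.mpr ⟨hxy, ux, huxx, h1 ▸ huyy⟩)
  have he : (e : Sym2 W) = s(ux, uy) := (Sym2.mem_and_mem_iff h1).mp ⟨huxe, huye⟩
  have huz : uz = ux ∨ uz = uy := by
    have := huze; rw [he, Sym2.mem_iff] at this; exact this
  rcases huz with h | h
  · exact nxz (lineGraph_adj_iff_exists.mpr ⟨hxz, ux, huxx, h ▸ huzz⟩)
  · exact nyz (lineGraph_adj_iff_exists.mpr ⟨hyz, uy, huyy, h ▸ huzz⟩)

/-- The subdivision of the edge `ab` of `G`. -/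
abbrev SubdivG {V : Type u} (G : SimpleGraph V) (a b : V) : SimpleGraph (Option V) :=
  (G.deleteEdges {s(a, b)}).map Function.Embedding.some ⊔
    SimpleGraph.fromEdgeSet
      {s(Option.some a, (Option.none : Option V)), s(Option.some b, Option.none)}

lemma subdivG_adj_some_some {V : Type u} {G : SimpleGraph V} {a b u v : V} :
    (SubdivG G a b).Adj (some u) (some v) ↔ G.Adj u v ∧ s(u, v) ≠ s(a, b) := by
  simp only [SubdivG, sup_adj, SimpleGraph.map_adj]
  simp [Function.Embedding.some, Sym2.eq_iff]

lemma subdivG_adj_some_none {V : Type u} {G : SimpleGraph V} {a b u : V} (hab : a ≠ b) :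
    (SubdivG G a b).Adj (some u) none ↔ u = a ∨ u = b := by
  simp only [SubdivG, sup_adj, SimpleGraph.map_adj]
  simp [Function.Embedding.some, Sym2.eq_iff]

lemma subdivG_adj_none_some {V : Type u} {G : SimpleGraph V} {a b u : V} (hab : a ≠ b) :
    (SubdivG G a b).Adj none (some u) ↔ u = a ∨ u = b := by
  rw [adj_comm]; exact subdivG_adj_some_none hab

/-- Subdividing an edge `ab` creates a claw, provided `a` has two nonadjacent
other neighbours. -/
lemma claw_create {V : Type u} {G : SimpleGraph V} {a b x y : V}
    (hab : G.Adj a b) (hax : G.Adj a x) (hay : G.Adj a y)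
    (hxb : x ≠ b) (hyb : y ≠ b) (hxy : x ≠ y) (hnxy : ¬G.Adj x y) :
    HasClaw (SubdivG G a b) := by
  refine ⟨some a, none, some x, some y, by simp, by simp, by simp [hxy], ?_, ?_, ?_, ?_, ?_, ?_⟩
  · rw [adj_comm, subdivG_adj_none_some hab.ne]; left; rfl
  · rw [subdivG_adj_some_some]
    exact ⟨hax, by simp [Sym2.eq_iff, hxb, hab.ne]⟩
  · rw [subdivG_adj_some_some]
    exact ⟨hay, by simp [Sym2.eq_iff, hyb, hab.ne]⟩
  · rw [subdivG_adj_none_some hab.ne]; push_neg; exact ⟨hax.ne', hxb⟩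
  · rw [subdivG_adj_none_some hab.ne]; push_neg; exact ⟨hay.ne', hyb⟩
  · rw [subdivG_adj_some_some]; exact fun h => hnxy h.1

/-- If the subdivided edge is a claw edge, the claw survives (re-using the new vertex). -/
lemma claw_case {V : Type u} {G : SimpleGraph V} {a b c x y z : V}
    (heq : s(a, b) = s(c, x)) (hcx : G.Adj c x) (hcy : G.Adj c y) (hcz : G.Adj c z)
    (hxy : x ≠ y) (hxz : x ≠ z) (hyz : y ≠ z) (hnyz : ¬G.Adj y z) :
    HasClaw (SubdivG G a b) := by
  have hab : a ≠ b := by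
    rw [Sym2.eq_iff] at heq
    rcases heq with ⟨h1, h2⟩ | ⟨h1, h2⟩ <;> subst h1 <;> subst h2
    exacts [hcx.ne, hcx.ne']
  have hceq : c = a ∨ c = b := by
    rw [Sym2.eq_iff] at heq
    rcases heq with ⟨h1, _⟩ | ⟨_, h2⟩
    exacts [Or.inl h1.symm, Or.inr h2.symm]
  have hxab : x = a ∨ x = b := by
    rw [Sym2.eq_iff] at heq
    rcases heq with ⟨_, h2⟩ | ⟨h1, _⟩
    exacts [Or.inr h2.symm, Or.inl h1.symm]
  refine ⟨some c, none, some y, some z, by simp, by simp, by simp [hyz], ?_, ?_, ?_, ?_, ?_, ?_⟩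
  · rw [adj_comm, subdivG_adj_none_some hab]; exact hceq
  · rw [subdivG_adj_some_some]
    refine ⟨hcy, ?_⟩
    rw [heq]
    simp only [ne_eq, Sym2.eq_iff, not_or]
    push_neg
    exact ⟨fun _ hh => hxy hh.symm, fun hh => absurd hh hcx.ne⟩
  · rw [subdivG_adj_some_some]
    refine ⟨hcz, ?_⟩
    rw [heq]
    simp only [ne_eq, Sym2.eq_iff, not_or]
    push_neg
    exact ⟨fun _ hh => hxz hh.symm, fun hh => absurd hh hcx.ne⟩
  · rw [subdivG_adj_none_some hab]
    push_neg
    rw [Sym2.eq_iff] at heq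
    rcases heq with ⟨h1, h2⟩ | ⟨h1, h2⟩ <;> subst h1 <;> subst h2
    · exact ⟨hcy.ne', fun hh => hxy hh.symm⟩
    · exact ⟨fun hh => hxy hh.symm, hcy.ne'⟩
  · rw [subdivG_adj_none_some hab]
    push_neg
    rw [Sym2.eq_iff] at heq
    rcases heq with ⟨h1, h2⟩ | ⟨h1, h2⟩ <;> subst h1 <;> subst h2
    · exact ⟨hcz.ne', fun hh => hxz hh.symm⟩
    · exact ⟨fun hh => hxz hh.symm, hcz.ne'⟩
  · rw [subdivG_adj_some_some]; exact fun h => hnyz h.1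

/-- A claw survives any edge-subdivision. -/
lemma claw_preserve {V : Type u} {G : SimpleGraph V} {a b : V}
    (hab : G.Adj a b) (h : HasClaw G) : HasClaw (SubdivG G a b) := by
  obtain ⟨c, x, y, z, hxy, hxz, hyz, acx, acy, acz, nxy, nxz, nyz⟩ := h
  by_cases h1 : s(a, b) = s(c, x)
  · exact claw_case h1 acx acy acz hxy hxz hyz nyz
  by_cases h2 : s(a, b) = s(c, y)
  · exact claw_case h2 acy acx acz hxy.symm hyz hxz nxz
  by_cases h3 : s(a, b) = s(c, z)
  · exact claw_case h3 acz acx acy hxz.symm hyz.symm hxy nxy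
  refine ⟨some c, some x, some y, some z, by simp [hxy], by simp [hxz], by simp [hyz],
    ?_, ?_, ?_, ?_, ?_, ?_⟩ <;> rw [subdivG_adj_some_some]
  · exact ⟨acx, fun hh => h1 hh.symm⟩
  · exact ⟨acy, fun hh => h2 hh.symm⟩
  · exact ⟨acz, fun hh => h3 hh.symm⟩
  · exact fun hh => nxy hh.1
  · exact fun hh => nxz hh.1
  · exact fun hh => nyz hh.1

/-- In `L(K_k)` for `k ≥ 4`, for every edge `ab` the vertex `a` has two nonadjacent
neighbours distinct from `b`. -/
lemma lk_prop {k : ℕ} (hk : 4 ≤ k) (a b : (completeGraph (Fin k)).edgeSet)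
    (hab : (completeGraph (Fin k)).lineGraph.Adj a b) :
    ∃ x y, (completeGraph (Fin k)).lineGraph.Adj a x ∧
      (completeGraph (Fin k)).lineGraph.Adj a y ∧ x ≠ b ∧ y ≠ b ∧ x ≠ y ∧
      ¬(completeGraph (Fin k)).lineGraph.Adj x y := by
  obtain ⟨hne, v, hva, hvb⟩ := lineGraph_adj_iff_exists.mp hab
  obtain ⟨q, hq⟩ := Sym2.mem_iff_exists.mp hva
  obtain ⟨t, ht⟩ := Sym2.mem_iff_exists.mp hvb
  have hvq : v ≠ q := by
    have := a.2; rw [hq, mem_edgeSet] at this; exact this.ne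
  have hvt : v ≠ t := by
    have := b.2; rw [ht, mem_edgeSet] at this; exact this.ne
  have hqt : q ≠ t := by
    intro h; subst h
    exact hne (Subtype.ext (hq.trans ht.symm))
  -- find a fourth vertex
  have hw : ∃ w : Fin k, w ∉ ({v, q, t} : Finset (Fin k)) := by
    by_contra h
    push_neg at h
    have hsub : (Finset.univ : Finset (Fin k)) ⊆ {v, q, t} := fun w _ => h w
    have := Finset.card_le_card hsub
    have h3 : ({v, q, t} : Finset (Fin k)).card ≤ 3 := by
      exact Finset.card_le_three
    simp [Finset.card_univ] at this
    omega
  obtain ⟨w, hw⟩ := hw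
  simp only [Finset.mem_insert, Finset.mem_singleton, not_or] at hw
  obtain ⟨hwv, hwq, hwt⟩ := hw
  refine ⟨⟨s(q, t), (mem_edgeSet _).mpr (by simp [hqt])⟩,
    ⟨s(v, w), (mem_edgeSet _).mpr (by simp [Ne.symm hwv])⟩, ?_, ?_, ?_, ?_, ?_, ?_⟩
  · refine lineGraph_adj_iff_exists.mpr ⟨?_, q, by rw [hq]; simp, by simp⟩
    intro h
    rw [Subtype.ext_iff, hq, Sym2.eq_iff] at h
    rcases h with ⟨h1, _⟩ | ⟨h1, _⟩
    exacts [hvq h1, hvt h1]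
  · refine lineGraph_adj_iff_exists.mpr ⟨?_, v, by rw [hq]; simp, by simp⟩
    intro h
    rw [Subtype.ext_iff, hq, Sym2.eq_iff] at h
    rcases h with ⟨_, h2⟩ | ⟨h1, _⟩
    exacts [hwq h2.symm, hwv h1.symm]
  · intro h
    rw [Subtype.ext_iff, ht, Sym2.eq_iff] at h
    rcases h with ⟨h1, _⟩ | ⟨h1, _⟩
    exacts [hvq h1.symm, hqt h1]
  · intro h
    rw [Subtype.ext_iff, ht, Sym2.eq_iff] at h
    rcases h with ⟨_, h2⟩ | ⟨h1, _⟩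
    exacts [hwt h2, hvt h1]
  · intro h
    rw [Subtype.ext_iff, Sym2.eq_iff] at h
    rcases h with ⟨h1, _⟩ | ⟨h1, _⟩
    exacts [hvq h1.symm, hwq h1.symm]
  · intro h
    obtain ⟨-, u, hu1, hu2⟩ := lineGraph_adj_iff_exists.mp h
    simp only [Sym2.mem_iff] at hu1 hu2
    rcases hu1 with rfl | rfl <;> rcases hu2 with h' | h'
    exacts [hvq h'.symm, hwq h'.symm, hvt h'.symm, hwt h'.symm]

/-- For `k ≥ 4`, if a subdivision `F` of `L(K_k)` is a line graph, then `F` is isomorphic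
to `L(K_k)` itself, i.e. no edge was actually subdivided. -/
theorem stmt8 (k : ℕ) (hk : 4 ≤ k) (F : GraphSig.{0})
    (hsub : IsSubdivisionOf F ⟨_, (completeGraph (Fin k)).lineGraph⟩)
    (hline : IsLineGraph F.2) :
    Nonempty (F.2 ≃g (completeGraph (Fin k)).lineGraph) := by
  have main : Nonempty (F.2 ≃g (completeGraph (Fin k)).lineGraph) ∨ HasClaw F.2 := by
    clear hline
    unfold IsSubdivisionOf at hsub
    induction hsub with
    | refl =>
      dsimp only
      exact Or.inl ⟨Iso.refl⟩
    | @tail X Y hpath step ih =>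
      obtain ⟨a, b, hab, ⟨e'⟩⟩ := step
      rcases ih with ⟨⟨e⟩⟩ | hclaw
      · -- subdividing produces a claw
        have habL : ((completeGraph (Fin k)).lineGraph).Adj (e a) (e b) := e.map_adj_iff.mpr hab
        obtain ⟨x, y, h1, h2, h3, h4, h5, h6⟩ := lk_prop hk (e a) (e b) habL
        have hx : e (e.symm x) = x := e.apply_symm_apply x
        have hy : e (e.symm y) = y := e.apply_symm_apply y
        have key : HasClaw (SubdivG X.2 a b) := by
          refine claw_create hab (x := e.symm x) (y := e.symm y) ?_ ?_ ?_ ?_ ?_ ?_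
          · rw [← e.map_adj_iff, hx]; exact h1
          · rw [← e.map_adj_iff, hy]; exact h2
          · intro h; exact h3 (by rw [← hx, h])
          · intro h; exact h4 (by rw [← hy, h])
          · intro h; exact h5 (by rw [← hx, ← hy, h])
          · intro h
            have := e.map_adj_iff.mpr h
            rw [hx, hy] at this
            exact h6 this
        exact Or.inr (key.of_iso e'.symm)
      · exact Or.inr ((claw_preserve hab hclaw).of_iso e'.symm)
  rcases main with h | hclaw
  · exact h
  · obtain ⟨W, H, ⟨eL⟩⟩ := hline
    exact absurd (hclaw.of_iso eL) (not_hasClaw_lineGraph H)
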